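/- Let W be a continuous distance monoid and M a W-metric space. Then the quotient Cseq(M)/≡ of the set of Cauchy sequences on M by the equivalence ≡, equipped with the induced distance d*_C([p], [q]) = d_C(p, q) (which is well defined on equivalence classes), is a Cauchy complete W-metric space. -/

import Mathlib

/-- A complete distance monoid: a commutative positively linearly ordered monoid whose
order is a complete linear order with least element `0`, and in which addition
distributes over infima. -/
class CompleteDistMonoid (W : Type*) extends AddCommMonoid W, CompleteLinearOrder W where
  bot_eq_zero : (⊥ : W) = 0
  add_le_add_left : ∀ a b : W, a ≤ b → ∀ c : W, c + a ≤ c + b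
  add_le_add_right : ∀ a b : W, a ≤ b → ∀ c : W, a + c ≤ b + c
  add_sInf : ∀ (A : Set W) (b : W), b + sInf A = ⨅ a ∈ A, (a + b)

/-- `W` is continuous at `0` if `0 = inf {a + b | a, b ∈ W⁺}` (where `W⁺ = W \ {0}`). -/
def ContinuousAtZero (W : Type*) [CompleteDistMonoid W] : Prop :=
  sInf {c : W | ∃ a b : W, a ≠ 0 ∧ b ≠ 0 ∧ c = a + b} = 0

/-- `d` is a `W`-metric on `M`. -/
def IsWMetric {W M : Type*} [CompleteDistMonoid W] (d : M → M → W) : Prop :=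
  (∀ x y : M, max (d x y) (d y x) = 0 ↔ x = y) ∧
  ∀ x y z : M, d x z ≤ d x y + d y z

/-- `p : A → M` is a Cauchy sequence on `(M, d)`: `A ⊆ W⁺`, `inf {a + b | a, b ∈ A} = 0`
and `d (p a) (p b) ≤ a + b`.  (Values of `p` outside `A` are irrelevant.) -/
def IsCauchySeqOn {W M : Type*} [CompleteDistMonoid W] (d : M → M → W)
    (A : Set W) (p : W → M) : Prop :=
  (∀ a ∈ A, a ≠ 0) ∧
  sInf {c : W | ∃ a ∈ A, ∃ b ∈ A, c = a + b} = 0 ∧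
  ∀ a ∈ A, ∀ b ∈ A, d (p a) (p b) ≤ a + b

/-- The Cauchy sequence `p : A → M` converges to `x`. -/
def ConvergesTo {W M : Type*} [CompleteDistMonoid W] (d : M → M → W)
    (A : Set W) (p : W → M) (x : M) : Prop :=
  (⨆ a ∈ {a : W | a ≠ 0}, ⨅ b ∈ {b ∈ A | b ≤ a}, d x (p b)) = 0 ∧
  (⨆ a ∈ {a : W | a ≠ 0}, ⨅ b ∈ {b ∈ A | b ≤ a}, d (p b) x) = 0

/-- `(M, d)` is Cauchy complete: every Cauchy sequence converges to some element. -/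
def CauchyComplete {W M : Type*} [CompleteDistMonoid W] (d : M → M → W) : Prop :=
  ∀ (A : Set W) (p : W → M), IsCauchySeqOn d A p → ∃ x : M, ConvergesTo d A p x

/-- The distance `d_C` between two Cauchy sequences. -/
noncomputable def dC {W M : Type*} [CompleteDistMonoid W] (d : M → M → W)
    (A : Set W) (p : W → M) (B : Set W) (q : W → M) : W :=
  ⨆ c ∈ {c : W | c ≠ 0}, ⨅ a ∈ {a ∈ A | a ≤ c}, ⨅ b ∈ {b ∈ B | b ≤ c}, d (p a) (q b)

/-- Equivalence of Cauchy sequences: `p ≡ q` iff `d_C(p,q) = 0` and `d_C(q,p) = 0`. -/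
def CEquiv {W M : Type*} [CompleteDistMonoid W] (d : M → M → W)
    (A : Set W) (p : W → M) (B : Set W) (q : W → M) : Prop :=
  dC d A p B q = 0 ∧ dC d B q A p = 0

/-- The set of Cauchy sequences on `(M, d)` (a pair: domain and map). -/
def CSeq {W M : Type*} [CompleteDistMonoid W] (d : M → M → W) :=
  {Ap : Set W × (W → M) // IsCauchySeqOn d Ap.1 Ap.2}

/-- The equivalence `≡` on Cauchy sequences. -/
def csRel {W M : Type*} [CompleteDistMonoid W] (d : M → M → W) (p q : CSeq d) : Prop :=
  CEquiv d p.1.1 p.1.2 q.1.1 q.1.2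

/-- The quotient `Cseq(M)/≡` of the set of Cauchy sequences by `≡`. -/
def CQuot {W M : Type*} [CompleteDistMonoid W] (d : M → M → W) := Quot (csRel d)

/-- The induced distance on the quotient `Cseq(M)/≡`, computed on representatives. -/
noncomputable def dQ {W M : Type*} [CompleteDistMonoid W] (d : M → M → W)
    (x y : CQuot d) : W :=
  dC d x.out.1.1 x.out.1.2 y.out.1.1 y.out.1.2

/-! ### Auxiliary lemmas -/

section Aux

variable {W : Type*} [CompleteDistMonoid W]

instance (priority := 100) CompleteDistMonoid.toCovariantLeft :
    CovariantClass W W (· + ·) (· ≤ ·) :=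
  ⟨fun c _ _ h => CompleteDistMonoid.add_le_add_left _ _ h c⟩

instance (priority := 100) CompleteDistMonoid.toCovariantRight :
    CovariantClass W W (Function.swap (· + ·)) (· ≤ ·) :=
  ⟨fun c _ _ h => CompleteDistMonoid.add_le_add_right _ _ h c⟩

theorem DM.zero_le (a : W) : 0 ≤ a := CompleteDistMonoid.bot_eq_zero (W := W) ▸ bot_le

theorem DM.eq_zero {a : W} (h : a ≤ 0) : a = 0 := le_antisymm h (DM.zero_le a)

theorem DM.pos {a : W} (h : a ≠ 0) : 0 < a := (DM.zero_le a).lt_of_ne (Ne.symm h)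

theorem DM.le_zero_of_forall_lt {x : W} (h : ∀ c : W, c ≠ 0 → x < c) : x ≤ 0 := by
  by_contra h'
  exact absurd (h x fun h0 => h' h0.le) (lt_irrefl x)

theorem DM.sInf_eq_zero {S : Set W} (h : ∀ c : W, c ≠ 0 → ∃ s ∈ S, s < c) : sInf S = 0 := by
  refine le_antisymm ?_ (DM.zero_le _)
  by_contra h'
  obtain ⟨s, hs, hlt⟩ := h (sInf S) fun h0 => h' h0.le
  exact absurd (sInf_le hs) hlt.not_ge

/-- `sumn n e = e + e + ⋯ + e` (`n+1` summands). -/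
def DM.sumn : ℕ → W → W
  | 0, e => e
  | n + 1, e => e + DM.sumn n e

theorem DM.le_sumn (n : ℕ) (e : W) : e ≤ DM.sumn n e := by
  cases n with
  | zero => exact le_rfl
  | succ n => exact le_add_of_nonneg_right (DM.zero_le _)

theorem DM.doubling (hW : ContinuousAtZero W) {c : W} (hc : c ≠ 0) :
    ∃ δ : W, δ ≠ 0 ∧ δ + δ < c := by
  have h1 : sInf {x : W | ∃ a b : W, a ≠ 0 ∧ b ≠ 0 ∧ x = a + b} < c := by
    rw [hW]; exact DM.pos hc
  obtain ⟨s, ⟨a, b, ha, hb, rfl⟩, hs⟩ := sInf_lt_iff.mp h1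
  refine ⟨min a b, (lt_min (DM.pos ha) (DM.pos hb)).ne', ?_⟩
  exact lt_of_le_of_lt (add_le_add (min_le_left a b) (min_le_right a b)) hs

theorem DM.exists_small (hW : ContinuousAtZero W) (n : ℕ) :
    ∀ {c : W}, c ≠ 0 → ∃ ε : W, ε ≠ 0 ∧ DM.sumn n ε < c := by
  induction n with
  | zero =>
    intro c hc
    obtain ⟨δ, hδ, hlt⟩ := DM.doubling hW hc
    exact ⟨δ, hδ, lt_of_le_of_lt (le_add_of_nonneg_right (DM.zero_le δ)) hlt⟩
  | succ n ih =>
    intro c hc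
    obtain ⟨δ, hδ, hlt⟩ := DM.doubling hW hc
    obtain ⟨ε, hε, hε2⟩ := ih hδ
    refine ⟨ε, hε, ?_⟩
    calc DM.sumn (n + 1) ε = ε + DM.sumn n ε := rfl
      _ ≤ δ + δ := add_le_add (le_trans (DM.le_sumn n ε) hε2.le) hε2.le
      _ < c := hlt

theorem DM.absorb (hW : ContinuousAtZero W) (n : ℕ) {x K : W}
    (h : ∀ ε : W, ε ≠ 0 → x ≤ K + DM.sumn n ε) : x ≤ K := by
  have hS : sInf {y : W | ∃ ε : W, ε ≠ 0 ∧ y = DM.sumn n ε} = 0 :=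
    DM.sInf_eq_zero fun c hc => by
      obtain ⟨ε, hε, hlt⟩ := DM.exists_small hW n hc
      exact ⟨_, ⟨ε, hε, rfl⟩, hlt⟩
  have h1 : x ≤ K + sInf {y : W | ∃ ε : W, ε ≠ 0 ∧ y = DM.sumn n ε} := by
    rw [CompleteDistMonoid.add_sInf]
    refine le_iInf₂ fun y hy => ?_
    obtain ⟨ε, hε, rfl⟩ := hy
    exact (h ε hε).trans (add_comm K _).le
  rwa [hS, add_zero] at h1

theorem DM.le_iInf₂_add {x K : W} {S T : Set W} {g : W → W → W}
    (h : ∀ a ∈ S, ∀ b ∈ T, x ≤ g a b + K) :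
    x ≤ (⨅ a ∈ S, ⨅ b ∈ T, g a b) + K := by
  have h1 : x ≤ K + sInf {y : W | ∃ a ∈ S, ∃ b ∈ T, y = g a b} := by
    rw [CompleteDistMonoid.add_sInf]
    refine le_iInf₂ fun y hy => ?_
    obtain ⟨a, ha, b, hb, rfl⟩ := hy
    exact h a ha b hb
  have h2 : sInf {y : W | ∃ a ∈ S, ∃ b ∈ T, y = g a b} ≤ ⨅ a ∈ S, ⨅ b ∈ T, g a b :=
    le_iInf₂ fun a ha => le_iInf₂ fun b hb => sInf_le ⟨a, ha, b, hb, rfl⟩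
  calc x ≤ K + sInf {y : W | ∃ a ∈ S, ∃ b ∈ T, y = g a b} := h1
    _ ≤ K + (⨅ a ∈ S, ⨅ b ∈ T, g a b) := add_le_add_right h2 K
    _ = (⨅ a ∈ S, ⨅ b ∈ T, g a b) + K := add_comm _ _

theorem DM.small_mem {A : Set W} (h2 : sInf {c : W | ∃ a ∈ A, ∃ b ∈ A, c = a + b} = 0)
    {c : W} (hc : c ≠ 0) : ∃ a ∈ A, a < c := by
  have h1 : sInf {c : W | ∃ a ∈ A, ∃ b ∈ A, c = a + b} < c := by rw [h2]; exact DM.pos hc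
  obtain ⟨s, ⟨a, ha, b, hb, rfl⟩, hs⟩ := sInf_lt_iff.mp h1
  exact ⟨a, ha, lt_of_le_of_lt (le_add_of_nonneg_right (DM.zero_le b)) hs⟩

variable {M : Type*} {d : M → M → W}

theorem DM.d_self (hd : IsWMetric d) (x : M) : d x x = 0 := by
  have h := (hd.1 x x).mpr rfl
  simpa using h

theorem DM.dC_le (hW : ContinuousAtZero W) (hd : IsWMetric d)
    {A B : Set W} {p q : W → M}
    (hp : IsCauchySeqOn d A p) (hq : IsCauchySeqOn d B q)
    {a b : W} (ha : a ∈ A) (hb : b ∈ B) :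
    dC d A p B q ≤ d (p a) (q b) + a + b := by
  refine iSup₂_le fun c hc => DM.absorb hW 1 fun ε hε => ?_
  have hm : (min c ε : W) ≠ 0 := (lt_min (DM.pos hc) (DM.pos hε)).ne'
  obtain ⟨a', ha', hlta⟩ := DM.small_mem hp.2.1 hm
  obtain ⟨b', hb', hltb⟩ := DM.small_mem hq.2.1 hm
  have h1 : (⨅ x ∈ {x ∈ A | x ≤ c}, ⨅ y ∈ {y ∈ B | y ≤ c}, d (p x) (q y)) ≤ d (p a') (q b') := by
    refine iInf₂_le_of_le a' ⟨ha', hlta.le.trans (min_le_left c ε)⟩ ?_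
    exact iInf₂_le b' ⟨hb', hltb.le.trans (min_le_left c ε)⟩
  refine h1.trans ?_
  have h2 : d (p a') (q b') ≤ (a' + a) + (d (p a) (q b) + (b + b')) := by
    calc d (p a') (q b') ≤ d (p a') (p a) + d (p a) (q b') := hd.2 _ _ _
      _ ≤ d (p a') (p a) + (d (p a) (q b) + d (q b) (q b')) :=
          add_le_add_right (hd.2 _ _ _) _
      _ ≤ (a' + a) + (d (p a) (q b) + (b + b')) :=
          add_le_add (hp.2.2 a' ha' a ha) (add_le_add_right (hq.2.2 b hb b' hb') _)
  refine h2.trans ?_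
  have h3 : (a' + a) + (d (p a) (q b) + (b + b')) = (d (p a) (q b) + a + b) + (a' + b') := by
    abel
  rw [h3]
  have h4 : a' + b' ≤ DM.sumn 1 ε := by
    show a' + b' ≤ ε + ε
    exact add_le_add (hlta.le.trans (min_le_right c ε)) (hltb.le.trans (min_le_right c ε))
  exact add_le_add_right h4 _

theorem DM.le_dC (hW : ContinuousAtZero W) (hd : IsWMetric d)
    {A B : Set W} {p q : W → M}
    (hp : IsCauchySeqOn d A p) (hq : IsCauchySeqOn d B q)
    {a b : W} (ha : a ∈ A) (hb : b ∈ B) :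
    d (p a) (q b) ≤ dC d A p B q + (a + b) := by
  refine DM.absorb hW 1 fun ε hε => ?_
  have key : ∀ a' ∈ {x ∈ A | x ≤ ε}, ∀ b' ∈ {y ∈ B | y ≤ ε},
      d (p a) (q b) ≤ d (p a') (q b') + ((a + b) + DM.sumn 1 ε) := by
    rintro a' ⟨ha', ha'ε⟩ b' ⟨hb', hb'ε⟩
    have h1 : d (p a) (q b) ≤ (a + a') + (d (p a') (q b') + (b' + b)) := by
      calc d (p a) (q b) ≤ d (p a) (p a') + d (p a') (q b) := hd.2 _ _ _
        _ ≤ d (p a) (p a') + (d (p a') (q b') + d (q b') (q b)) :=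
            add_le_add_right (hd.2 _ _ _) _
        _ ≤ (a + a') + (d (p a') (q b') + (b' + b)) :=
            add_le_add (hp.2.2 a ha a' ha') (add_le_add_right (hq.2.2 b' hb' b hb) _)
    have h2 : (a + a') + (d (p a') (q b') + (b' + b))
        = d (p a') (q b') + ((a + b) + (a' + b')) := by abel
    have h3 : a' + b' ≤ DM.sumn 1 ε := by
      show a' + b' ≤ ε + ε
      exact add_le_add ha'ε hb'ε
    refine h1.trans (h2.le.trans ?_)
    exact add_le_add_right (add_le_add_right h3 _) _
  have h4 := DM.le_iInf₂_add key
  have h5 : (⨅ a' ∈ {x ∈ A | x ≤ ε}, ⨅ b' ∈ {y ∈ B | y ≤ ε}, d (p a') (q b'))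
      ≤ dC d A p B q :=
    le_iSup₂ (f := fun c _ => ⨅ a' ∈ {x ∈ A | x ≤ c}, ⨅ b' ∈ {y ∈ B | y ≤ c}, d (p a') (q b'))
      ε hε
  calc d (p a) (q b)
      ≤ (⨅ a' ∈ {x ∈ A | x ≤ ε}, ⨅ b' ∈ {y ∈ B | y ≤ ε}, d (p a') (q b'))
        + ((a + b) + DM.sumn 1 ε) := h4
    _ ≤ dC d A p B q + ((a + b) + DM.sumn 1 ε) := add_le_add_left h5 _
    _ = (dC d A p B q + (a + b)) + DM.sumn 1 ε := (add_assoc _ _ _).symm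

theorem DM.dC_self (hd : IsWMetric d) {A : Set W} {p : W → M}
    (hp : IsCauchySeqOn d A p) : dC d A p A p = 0 := by
  refine le_antisymm (iSup₂_le fun c hc => ?_) (DM.zero_le _)
  obtain ⟨a, ha, hlt⟩ := DM.small_mem hp.2.1 hc
  have h1 : (⨅ x ∈ {x ∈ A | x ≤ c}, ⨅ y ∈ {y ∈ A | y ≤ c}, d (p x) (p y)) ≤ d (p a) (p a) :=
    iInf₂_le_of_le a ⟨ha, hlt.le⟩ (iInf₂_le a ⟨ha, hlt.le⟩)
  simpa [DM.d_self hd] using h1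

theorem DM.dC_triangle (hW : ContinuousAtZero W) (hd : IsWMetric d)
    {A B C : Set W} {p q r : W → M}
    (hp : IsCauchySeqOn d A p) (hq : IsCauchySeqOn d B q) (hr : IsCauchySeqOn d C r) :
    dC d A p C r ≤ dC d A p B q + dC d B q C r := by
  refine DM.absorb hW 5 fun ε hε => ?_
  obtain ⟨a, ha, hA⟩ := DM.small_mem hp.2.1 hε
  obtain ⟨b, hb, hB⟩ := DM.small_mem hq.2.1 hε
  obtain ⟨c, hc, hC⟩ := DM.small_mem hr.2.1 hε
  calc dC d A p C r ≤ d (p a) (r c) + a + c := DM.dC_le hW hd hp hr ha hc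
    _ ≤ (d (p a) (q b) + d (q b) (r c)) + a + c :=
        add_le_add_left (add_le_add_left (hd.2 _ _ _) a) c
    _ ≤ ((dC d A p B q + (a + b)) + (dC d B q C r + (b + c))) + a + c :=
        add_le_add_left (add_le_add_left
          (add_le_add (DM.le_dC hW hd hp hq ha hb) (DM.le_dC hW hd hq hr hb hc)) a) c
    _ = (dC d A p B q + dC d B q C r) + (((a + b) + (b + c)) + (a + c)) := by abel
    _ ≤ (dC d A p B q + dC d B q C r) + DM.sumn 5 ε := by
        refine add_le_add_right ?_ _
        have h6 : DM.sumn 5 ε = ((ε + ε) + (ε + ε)) + (ε + ε) := by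
          show ε + (ε + (ε + (ε + (ε + ε)))) = _
          abel
        rw [h6]
        exact add_le_add (add_le_add (add_le_add hA.le hB.le) (add_le_add hB.le hC.le))
          (add_le_add hA.le hC.le)

theorem DM.csRel_equivalence (hW : ContinuousAtZero W) (hd : IsWMetric d) :
    Equivalence (csRel d) := by
  constructor
  · intro p; exact ⟨DM.dC_self hd p.2, DM.dC_self hd p.2⟩
  · intro p q h; exact ⟨h.2, h.1⟩
  · intro p q r hpq hqr
    constructor
    · refine DM.eq_zero ?_
      calc dC d p.1.1 p.1.2 r.1.1 r.1.2
          ≤ dC d p.1.1 p.1.2 q.1.1 q.1.2 + dC d q.1.1 q.1.2 r.1.1 r.1.2 :=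
            DM.dC_triangle hW hd p.2 q.2 r.2
        _ = 0 := by rw [hpq.1, hqr.1, add_zero]
    · refine DM.eq_zero ?_
      calc dC d r.1.1 r.1.2 p.1.1 p.1.2
          ≤ dC d r.1.1 r.1.2 q.1.1 q.1.2 + dC d q.1.1 q.1.2 p.1.1 p.1.2 :=
            DM.dC_triangle hW hd r.2 q.2 p.2
        _ = 0 := by rw [hqr.2, hpq.2, add_zero]

theorem DM.dC_congr (hW : ContinuousAtZero W) (hd : IsWMetric d) {p p' q q' : CSeq d}
    (hp : csRel d p p') (hq : csRel d q q') :
    dC d p.1.1 p.1.2 q.1.1 q.1.2 = dC d p'.1.1 p'.1.2 q'.1.1 q'.1.2 := by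
  have key : ∀ x x' y y' : CSeq d, csRel d x' x → csRel d y y' →
      dC d x.1.1 x.1.2 y.1.1 y.1.2 ≤ dC d x'.1.1 x'.1.2 y'.1.1 y'.1.2 := by
    intro x x' y y' hx hy
    calc dC d x.1.1 x.1.2 y.1.1 y.1.2
        ≤ dC d x.1.1 x.1.2 y'.1.1 y'.1.2 + dC d y'.1.1 y'.1.2 y.1.1 y.1.2 :=
          DM.dC_triangle hW hd x.2 y'.2 y.2
      _ = dC d x.1.1 x.1.2 y'.1.1 y'.1.2 := by rw [hy.2, add_zero]
      _ ≤ dC d x.1.1 x.1.2 x'.1.1 x'.1.2 + dC d x'.1.1 x'.1.2 y'.1.1 y'.1.2 :=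
            DM.dC_triangle hW hd x.2 x'.2 y'.2
      _ = dC d x'.1.1 x'.1.2 y'.1.1 y'.1.2 := by rw [hx.2, zero_add]
  exact le_antisymm (key p p' q q' ⟨hp.2, hp.1⟩ hq) (key p' p q' q hp ⟨hq.2, hq.1⟩)

theorem DM.dQ_mk (hW : ContinuousAtZero W) (hd : IsWMetric d) (p q : CSeq d) :
    dQ d (Quot.mk (csRel d) p) (Quot.mk (csRel d) q) = dC d p.1.1 p.1.2 q.1.1 q.1.2 := by
  have hrel : ∀ x : CSeq d, csRel d (Quot.mk (csRel d) x).out x := fun x =>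
    ((DM.csRel_equivalence hW hd).eqvGen_iff).mp
      (Quot.eqvGen_exact (Quot.out_eq (Quot.mk (csRel d) x)))
  exact DM.dC_congr hW hd (hrel p) (hrel q)

end Aux

/-- The quotient `Cseq(M)/≡`, with the induced distance (which is well defined on
equivalence classes), is a Cauchy complete `W`-metric space. -/
theorem stmt11 {W M : Type*} [CompleteDistMonoid W] (hW : ContinuousAtZero W)
    (d : M → M → W) (hd : IsWMetric d) :
    (∀ p q : CSeq d,
        dQ d (Quot.mk (csRel d) p) (Quot.mk (csRel d) q) = dC d p.1.1 p.1.2 q.1.1 q.1.2) ∧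
    IsWMetric (dQ d) ∧ CauchyComplete (dQ d) := by
  refine ⟨fun p q => DM.dQ_mk hW hd p q, ⟨?_, ?_⟩, ?_⟩
  · -- metric separation axiom
    intro x y
    constructor
    · intro h
      have h1 : dQ d x y = 0 := DM.eq_zero ((le_max_left _ _).trans h.le)
      have h2 : dQ d y x = 0 := DM.eq_zero ((le_max_right _ _).trans h.le)
      have hrel : csRel d x.out y.out := ⟨h1, h2⟩
      have h3 := Quot.sound hrel
      exact (Quot.out_eq x).symm.trans (h3.trans (Quot.out_eq y))
    · rintro rfl
      have h1 : dQ d x x = 0 := DM.dC_self hd (Quot.out x).2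
      rw [h1, max_self]
  · -- triangle inequality
    intro x y z
    exact DM.dC_triangle hW hd x.out.2 y.out.2 z.out.2
  · -- Cauchy completeness
    intro A P hP
    classical
    set E : Set W := {e : W | ∃ a ∈ A, e = a + a} with hE
    have hsel : ∀ e : W, ∃ x : M, e ∈ E →
        ∃ a, a ∈ A ∧ e = a + a ∧ ∃ b, b ∈ (P a).out.1.1 ∧ b < a ∧ x = (P a).out.1.2 b := by
      intro e
      by_cases he : e ∈ E
      · obtain ⟨a, ha, he'⟩ := he
        obtain ⟨b, hbmem, hblt⟩ := DM.small_mem (P a).out.2.2.1 (hP.1 a ha)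
        exact ⟨(P a).out.1.2 b, fun _ => ⟨a, ha, he', b, hbmem, hblt, rfl⟩⟩
      · exact ⟨(P 0).out.1.2 0, fun h => absurd h he⟩
    choose q hq using hsel
    have hPP : ∀ a ∈ A, ∀ a' ∈ A,
        dC d (P a).out.1.1 (P a).out.1.2 (P a').out.1.1 (P a').out.1.2 ≤ a + a' :=
      fun a ha a' ha' => hP.2.2 a ha a' ha'
    -- (E, q) is a Cauchy sequence
    have hq1 : ∀ e ∈ E, e ≠ 0 := by
      rintro e ⟨a, ha, rfl⟩ h0
      have hle : a ≤ a + a := le_add_of_nonneg_right (DM.zero_le a)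
      exact hP.1 a ha (DM.eq_zero (h0 ▸ hle))
    have hq2 : sInf {c : W | ∃ e ∈ E, ∃ e' ∈ E, c = e + e'} = 0 := by
      refine DM.sInf_eq_zero fun c hc => ?_
      obtain ⟨ε, hε, hlt⟩ := DM.exists_small hW 3 hc
      obtain ⟨a, ha, haε⟩ := DM.small_mem hP.2.1 hε
      refine ⟨(a + a) + (a + a), ⟨a + a, ⟨a, ha, rfl⟩, a + a, ⟨a, ha, rfl⟩, rfl⟩, ?_⟩
      have h1 : (a + a) + (a + a) ≤ DM.sumn 3 ε := by
        have h2 : DM.sumn 3 ε = (ε + ε) + (ε + ε) := by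
          show ε + (ε + (ε + ε)) = _
          abel
        rw [h2]
        exact add_le_add (add_le_add haε.le haε.le) (add_le_add haε.le haε.le)
      exact lt_of_le_of_lt h1 hlt
    have hq3 : ∀ e ∈ E, ∀ e' ∈ E, d (q e) (q e') ≤ e + e' := by
      intro e he e' he'
      obtain ⟨a, ha, he₂, b, hbmem, hblt, hqv⟩ := hq e he
      obtain ⟨a', ha', he₂', b', hbmem', hblt', hqv'⟩ := hq e' he'
      rw [hqv, hqv', he₂, he₂']
      calc d ((P a).out.1.2 b) ((P a').out.1.2 b')
          ≤ dC d (P a).out.1.1 (P a).out.1.2 (P a').out.1.1 (P a').out.1.2 + (b + b') :=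
            DM.le_dC hW hd (P a).out.2 (P a').out.2 hbmem hbmem'
        _ ≤ (a + a') + (b + b') := add_le_add_left (hPP a ha a' ha') _
        _ = (a + b) + (a' + b') := by abel
        _ ≤ (a + a) + (a' + a') :=
            add_le_add (add_le_add_right hblt.le a) (add_le_add_right hblt'.le a')
    have hqc : IsCauchySeqOn d E q := ⟨hq1, hq2, hq3⟩
    set pq : CSeq d := ⟨(E, q), hqc⟩ with hpqdef
    set X : CQuot d := Quot.mk (csRel d) pq with hX
    -- distance estimates between the limit candidate and the sequence elements
    have hXa : ∀ a ∈ A, dC d E q (P a).out.1.1 (P a).out.1.2 ≤ a := by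
      intro a ha
      refine DM.absorb hW 4 fun ε hε => ?_
      obtain ⟨e, heE, heε⟩ := DM.small_mem hq2 hε
      obtain ⟨b, hbB, hbε⟩ := DM.small_mem (P a).out.2.2.1 hε
      obtain ⟨ae, hae, heq, be, hbe, hbelt, hqe⟩ := hq e heE
      have h1 : dC d E q (P a).out.1.1 (P a).out.1.2 ≤ d (q e) ((P a).out.1.2 b) + e + b :=
        DM.dC_le hW hd hqc (P a).out.2 heE hbB
      have h2 : d (q e) ((P a).out.1.2 b) ≤ (ae + a) + (be + b) := by
        rw [hqe]
        calc d ((P ae).out.1.2 be) ((P a).out.1.2 b)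
            ≤ dC d (P ae).out.1.1 (P ae).out.1.2 (P a).out.1.1 (P a).out.1.2 + (be + b) :=
              DM.le_dC hW hd (P ae).out.2 (P a).out.2 hbe hbB
          _ ≤ (ae + a) + (be + b) := add_le_add_left (hPP ae hae a ha) _
      have hae_e : ae ≤ e := by
        rw [heq]; exact le_add_of_nonneg_right (DM.zero_le ae)
      have haeε : ae < ε := lt_of_le_of_lt hae_e heε
      refine h1.trans ?_
      calc d (q e) ((P a).out.1.2 b) + e + b
          ≤ ((ae + a) + (be + b)) + e + b := add_le_add_left (add_le_add_left h2 e) b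
        _ = a + (ae + (be + (b + (e + b)))) := by abel
        _ ≤ a + (ε + (ε + (ε + (ε + ε)))) := by
            refine add_le_add_right ?_ a
            exact add_le_add haeε.le (add_le_add (lt_trans hbelt haeε).le
              (add_le_add hbε.le (add_le_add heε.le hbε.le)))
        _ = a + DM.sumn 4 ε := rfl
    have haX : ∀ a ∈ A, dC d (P a).out.1.1 (P a).out.1.2 E q ≤ a := by
      intro a ha
      refine DM.absorb hW 4 fun ε hε => ?_
      obtain ⟨e, heE, heε⟩ := DM.small_mem hq2 hε
      obtain ⟨b, hbB, hbε⟩ := DM.small_mem (P a).out.2.2.1 hε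
      obtain ⟨ae, hae, heq, be, hbe, hbelt, hqe⟩ := hq e heE
      have h1 : dC d (P a).out.1.1 (P a).out.1.2 E q ≤ d ((P a).out.1.2 b) (q e) + b + e :=
        DM.dC_le hW hd (P a).out.2 hqc hbB heE
      have h2 : d ((P a).out.1.2 b) (q e) ≤ (a + ae) + (b + be) := by
        rw [hqe]
        calc d ((P a).out.1.2 b) ((P ae).out.1.2 be)
            ≤ dC d (P a).out.1.1 (P a).out.1.2 (P ae).out.1.1 (P ae).out.1.2 + (b + be) :=
              DM.le_dC hW hd (P a).out.2 (P ae).out.2 hbB hbe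
          _ ≤ (a + ae) + (b + be) := add_le_add_left (hPP a ha ae hae) _
      have hae_e : ae ≤ e := by
        rw [heq]; exact le_add_of_nonneg_right (DM.zero_le ae)
      have haeε : ae < ε := lt_of_le_of_lt hae_e heε
      refine h1.trans ?_
      calc d ((P a).out.1.2 b) (q e) + b + e
          ≤ ((a + ae) + (b + be)) + b + e := add_le_add_left (add_le_add_left h2 b) e
        _ = a + (ae + (be + (b + (b + e)))) := by abel
        _ ≤ a + (ε + (ε + (ε + (ε + ε)))) := by
            refine add_le_add_right ?_ a
            exact add_le_add haeε.le (add_le_add (lt_trans hbelt haeε).le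
              (add_le_add hbε.le (add_le_add hbε.le heε.le)))
        _ = a + DM.sumn 4 ε := rfl
    have hdQ1 : ∀ a ∈ A, dQ d X (P a) ≤ a := by
      intro a ha
      have h0 : dQ d X (P a) = dC d E q (P a).out.1.1 (P a).out.1.2 := by
        conv_lhs => rw [hX, ← Quot.out_eq (P a)]
        exact DM.dQ_mk hW hd pq (P a).out
      rw [h0]
      exact hXa a ha
    have hdQ2 : ∀ a ∈ A, dQ d (P a) X ≤ a := by
      intro a ha
      have h0 : dQ d (P a) X = dC d (P a).out.1.1 (P a).out.1.2 E q := by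
        conv_lhs => rw [hX, ← Quot.out_eq (P a)]
        exact DM.dQ_mk hW hd (P a).out pq
      rw [h0]
      exact haX a ha
    refine ⟨X, ?_, ?_⟩
    · refine le_antisymm (iSup₂_le fun c hc => ?_) (DM.zero_le _)
      refine DM.le_zero_of_forall_lt fun c' hc' => ?_
      have hm : (min c c' : W) ≠ 0 := (lt_min (DM.pos hc) (DM.pos hc')).ne'
      obtain ⟨a, ha, hlt⟩ := DM.small_mem hP.2.1 hm
      have h1 : (⨅ b ∈ {b ∈ A | b ≤ c}, dQ d X (P b)) ≤ dQ d X (P a) :=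
        iInf₂_le a ⟨ha, hlt.le.trans (min_le_left _ _)⟩
      exact lt_of_le_of_lt (h1.trans (hdQ1 a ha)) (lt_of_lt_of_le hlt (min_le_right c c'))
    · refine le_antisymm (iSup₂_le fun c hc => ?_) (DM.zero_le _)
      refine DM.le_zero_of_forall_lt fun c' hc' => ?_
      have hm : (min c c' : W) ≠ 0 := (lt_min (DM.pos hc) (DM.pos hc')).ne'
      obtain ⟨a, ha, hlt⟩ := DM.small_mem hP.2.1 hm
      have h1 : (⨅ b ∈ {b ∈ A | b ≤ c}, dQ d (P b) X) ≤ dQ d (P a) X :=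
        iInf₂_le a ⟨ha, hlt.le.trans (min_le_left _ _)⟩
      exact lt_of_le_of_lt (h1.trans (hdQ2 a ha)) (lt_of_lt_of_le hlt (min_le_right c c'))
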